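/- The variance of the weighted sum is maximized by the comonotonic coupling: Var(Σ_i w_i X_i) ≤ Var(Σ_i w_i F_{X_i}^{-1}(U)) for any random vector (X_1,...,X_d) with given marginals F_{X_i}, nonnegative weights w_i, and U uniform on (0,1). -/

import Mathlib

open MeasureTheory ProbabilityTheory Real Filter

noncomputable def cov' {Ω : Type*} [MeasurableSpace Ω] (μ : Measure Ω) (X Y : Ω → ℝ) : ℝ :=
  (∫ ω, X ω * Y ω ∂μ) - (∫ ω, X ω ∂μ) * (∫ ω, Y ω ∂μ)

noncomputable def var' {Ω : Type*} [MeasurableSpace Ω] (μ : Measure Ω) (X : Ω → ℝ) : ℝ :=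
  cov' μ X X

noncomputable def corr' {Ω : Type*} [MeasurableSpace Ω] (μ : Measure Ω) (X Y : Ω → ℝ) : ℝ :=
  cov' μ X Y / (Real.sqrt (var' μ X) * Real.sqrt (var' μ Y))

noncomputable def quantile (ν : Measure ℝ) (p : ℝ) : ℝ := sInf {x | p ≤ cdf ν x}

noncomputable def comono {Ω : Type*} [MeasurableSpace Ω] (μ : Measure Ω) (U : Ω → ℝ) (X : Ω → ℝ) :
    Ω → ℝ :=
  fun ω => quantile (Measure.map X μ) (U ω)

noncomputable def RHIX {Ω : Type*} [MeasurableSpace Ω] (μ : Measure Ω) (U : Ω → ℝ) {d : ℕ}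
    (w : Fin d → ℝ) (X : Fin d → Ω → ℝ) : ℝ :=
  (∑ p ∈ Finset.univ.offDiag, w p.1 * w p.2 * cov' μ (X p.1) (X p.2)) /
  (∑ p ∈ Finset.univ.offDiag, w p.1 * w p.2 * cov' μ (comono μ U (X p.1)) (comono μ U (X p.2)))

namespace StmtAux

open Set

section Quantile

variable (ν : Measure ℝ) [IsProbabilityMeasure ν]

lemma bddBelow_quantile_set {p : ℝ} (hp0 : 0 < p) : BddBelow {x | p ≤ cdf ν x} := by
  obtain ⟨y0, hy0⟩ := ((tendsto_cdf_atBot ν).eventually (eventually_lt_nhds hp0)).exists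
  refine ⟨y0, fun y hy => ?_⟩
  by_contra hlt
  push_neg at hlt
  exact absurd (le_trans hy (monotone_cdf ν hlt.le)) (not_le.mpr hy0)

lemma nonempty_quantile_set {p : ℝ} (hp1 : p < 1) : {x | p ≤ cdf ν x}.Nonempty := by
  obtain ⟨y, hy⟩ := ((tendsto_cdf_atTop ν).eventually (eventually_gt_nhds hp1)).exists
  exact ⟨y, hy.le⟩

lemma le_cdf_quantile {p : ℝ} (hp0 : 0 < p) (hp1 : p < 1) :
    p ≤ cdf ν (quantile ν p) := by
  set a := quantile ν p with ha
  have hall : ∀ z ∈ Ioi a, p ≤ cdf ν z := by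
    intro z hz
    obtain ⟨y, hy, hyz⟩ := exists_lt_of_csInf_lt (nonempty_quantile_set ν hp1) hz
    exact le_trans hy (monotone_cdf ν hyz.le)
  have hcont : Filter.Tendsto (cdf ν) (nhdsWithin a (Ioi a)) (nhds (cdf ν a)) :=
    ((cdf ν).right_continuous a).mono_left (nhdsWithin_mono a Ioi_subset_Ici_self)
  exact ge_of_tendsto hcont (eventually_nhdsWithin_of_forall hall)

lemma quantile_le_iff {p x : ℝ} (hp0 : 0 < p) (hp1 : p < 1) :
    quantile ν p ≤ x ↔ p ≤ cdf ν x := by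
  constructor
  · intro h
    exact le_trans (le_cdf_quantile ν hp0 hp1) (monotone_cdf ν h)
  · intro h
    exact csInf_le (bddBelow_quantile_set ν hp0) h

lemma quantile_mono {p q : ℝ} (hp0 : 0 < p) (hq1 : q < 1) (hpq : p ≤ q) :
    quantile ν p ≤ quantile ν q :=
  csInf_le_csInf (bddBelow_quantile_set ν hp0) (nonempty_quantile_set ν hq1)
    (fun x hx => le_trans hpq hx)

lemma quantile_nonpos {p : ℝ} (hp : p ≤ 0) : quantile ν p = 0 := by
  have : {x | p ≤ cdf ν x} = univ := eq_univ_of_forall fun x => hp.trans (cdf_nonneg ν x)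
  rw [quantile, this]
  exact Real.sInf_of_not_bddBelow (by simpa using not_bddBelow_univ)

lemma quantile_gt_one {p : ℝ} (hp : 1 < p) : quantile ν p = 0 := by
  have : {x | p ≤ cdf ν x} = ∅ := by
    ext x
    simp only [mem_setOf_eq, mem_empty_iff_false, iff_false, not_le]
    exact lt_of_le_of_lt (cdf_le_one ν x) hp
  rw [quantile, this]
  exact Real.sInf_empty

lemma measurable_quantile : Measurable (quantile ν) := by
  apply measurable_of_Iic
  intro x
  have hset : quantile ν ⁻¹' Iic x =
      (Ioo (0:ℝ) 1 ∩ Iic (cdf ν x)) ∪ ((Iic (0:ℝ) ∪ Ioi 1) ∩ {p : ℝ | (0:ℝ) ≤ x}) ∪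
        ({(1:ℝ)} ∩ {p : ℝ | quantile ν 1 ≤ x}) := by
    ext p
    simp only [mem_preimage, mem_Iic, mem_union, mem_inter_iff, mem_Ioo, mem_setOf_eq,
      mem_Ioi, mem_singleton_iff]
    rcases le_or_gt p 0 with hp | hp
    · rw [quantile_nonpos ν hp]
      constructor
      · intro h; exact Or.inl (Or.inr ⟨Or.inl hp, h⟩)
      · rintro ((⟨⟨h1, _⟩, _⟩ | ⟨_, h⟩) | ⟨h1, h2⟩)
        · exact absurd h1 (not_lt.mpr hp)
        · exact h
        · exact absurd h1 (by linarith)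
    · rcases lt_trichotomy p 1 with hp1 | hp1 | hp1
      · rw [quantile_le_iff ν hp hp1]
        constructor
        · intro h; exact Or.inl (Or.inl ⟨⟨hp, hp1⟩, h⟩)
        · rintro ((⟨_, h⟩ | ⟨h1, _⟩) | ⟨h1, _⟩)
          · exact h
          · rcases h1 with h1 | h1
            · exact absurd h1 (not_le.mpr hp)
            · exact absurd h1 (by linarith)
          · exact absurd h1 (by linarith)
      · subst hp1
        constructor
        · intro h; exact Or.inr ⟨rfl, h⟩
        · rintro ((⟨⟨_, h⟩, _⟩ | ⟨h1, _⟩) | ⟨_, h⟩)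
          · exact absurd h (lt_irrefl _)
          · rcases h1 with h1 | h1
            · exact absurd h1 (by norm_num)
            · exact absurd h1 (lt_irrefl _)
          · exact h
      · rw [quantile_gt_one ν hp1]
        constructor
        · intro h; exact Or.inl (Or.inr ⟨Or.inr hp1, h⟩)
        · rintro ((⟨⟨_, h⟩, _⟩ | ⟨_, h⟩) | ⟨h1, _⟩)
          · exact absurd h (by linarith)
          · exact h
          · exact absurd h1 (by linarith)
  rw [hset]
  refine MeasurableSet.union (MeasurableSet.union ?_ ?_) ?_
  · exact (measurableSet_Ioo).inter measurableSet_Iic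
  · exact (measurableSet_Iic.union measurableSet_Ioi).inter (MeasurableSet.const _)
  · exact (measurableSet_singleton 1).inter (MeasurableSet.const _)

end Quantile


section Comono

variable {Ω : Type*} [MeasurableSpace Ω] (μ : Measure Ω) [IsProbabilityMeasure μ]
  {U : Ω → ℝ} (hUm : Measurable U)
  (hU : Measure.map U μ = volume.restrict (Set.Ioo (0 : ℝ) 1))
  {X : Ω → ℝ} (hXm : Measurable X)

include hUm hXm

lemma measurable_comono : Measurable (comono μ U X) := by
  have : IsProbabilityMeasure (Measure.map X μ) := Measure.isProbabilityMeasure_map hXm.aemeasurable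
  exact (measurable_quantile (Measure.map X μ)).comp hUm

include hU in
lemma map_comono : Measure.map (comono μ U X) μ = Measure.map X μ := by
  set ν := Measure.map X μ with hν
  have hprob : IsProbabilityMeasure ν := Measure.isProbabilityMeasure_map hXm.aemeasurable
  have hcm : Measurable (comono μ U X) := measurable_comono μ hUm hXm
  have hprob2 : IsProbabilityMeasure (Measure.map (comono μ U X) μ) :=
    Measure.isProbabilityMeasure_map hcm.aemeasurable
  refine Measure.ext_of_Iic _ _ (fun a => ?_)
  rw [Measure.map_apply hcm measurableSet_Iic, ← ProbabilityTheory.ofReal_cdf ν a]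
  have hpre : comono μ U X ⁻¹' Iic a = U ⁻¹' (quantile ν ⁻¹' Iic a) := rfl
  rw [hpre, ← Measure.map_apply hUm ((measurable_quantile ν) measurableSet_Iic), hU,
    Measure.restrict_apply ((measurable_quantile ν) measurableSet_Iic)]
  have hinter : (quantile ν ⁻¹' Iic a) ∩ Ioo (0:ℝ) 1 = Iic (cdf ν a) ∩ Ioo (0:ℝ) 1 := by
    ext p
    simp only [mem_inter_iff, mem_preimage, mem_Iic, mem_Ioo, and_congr_left_iff]
    intro hp
    exact quantile_le_iff ν hp.1 hp.2
  rw [hinter]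
  set c := cdf ν a with hc
  have hc0 : 0 ≤ c := cdf_nonneg ν a
  have hc1 : c ≤ 1 := cdf_le_one ν a
  rcases lt_or_eq_of_le hc1 with hlt | heq
  · have : Iic c ∩ Ioo (0:ℝ) 1 = Ioc 0 c := by
      ext p
      simp only [mem_inter_iff, mem_Iic, mem_Ioo, mem_Ioc]
      constructor
      · rintro ⟨h1, h2, _⟩; exact ⟨h2, h1⟩
      · rintro ⟨h1, h2⟩; exact ⟨h2, h1, lt_of_le_of_lt h2 hlt⟩
    rw [this, Real.volume_Ioc, sub_zero]
  · have : Iic c ∩ Ioo (0:ℝ) 1 = Ioo 0 1 := by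
      ext p
      simp only [mem_inter_iff, mem_Iic, mem_Ioo]
      constructor
      · rintro ⟨_, h⟩; exact h
      · rintro ⟨h1, h2⟩; exact ⟨by rw [← heq] at h2; exact h2.le, h1, h2⟩
    rw [this, Real.volume_Ioo, sub_zero, ← heq]

include hU in
lemma memℒp_comono (hX : MemLp X 2 μ) : MemLp (comono μ U X) 2 μ := by
  have hcm : Measurable (comono μ U X) := measurable_comono μ hUm hXm
  have h1 : MemLp (id : ℝ → ℝ) 2 (Measure.map X μ) :=
    (memLp_map_measure_iff aestronglyMeasurable_id hXm.aemeasurable).mpr hX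
  rw [← map_comono μ hUm hU hXm] at h1
  exact (memLp_map_measure_iff aestronglyMeasurable_id hcm.aemeasurable).mp h1

include hU in
lemma integral_comono (hX : MemLp X 2 μ) :
    ∫ ω, comono μ U X ω ∂μ = ∫ ω, X ω ∂μ := by
  have hcm : Measurable (comono μ U X) := measurable_comono μ hUm hXm
  have h1 : ∫ ω, comono μ U X ω ∂μ = ∫ x, x ∂(Measure.map (comono μ U X) μ) :=
    (integral_map hcm.aemeasurable aestronglyMeasurable_id).symm
  have h2 : ∫ ω, X ω ∂μ = ∫ x, x ∂(Measure.map X μ) :=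
    (integral_map hXm.aemeasurable aestronglyMeasurable_id).symm
  rw [h1, h2, map_comono μ hUm hU hXm]

include hU in
lemma survival_comono (s : ℝ) :
    μ {ω | s < comono μ U X ω} = μ {ω | s < X ω} := by
  have hcm : Measurable (comono μ U X) := measurable_comono μ hUm hXm
  have h1 : {ω | s < comono μ U X ω} = comono μ U X ⁻¹' Ioi s := rfl
  have h2 : {ω | s < X ω} = X ⁻¹' Ioi s := rfl
  rw [h1, h2, ← Measure.map_apply hcm measurableSet_Ioi, ← Measure.map_apply hXm measurableSet_Ioi,
    map_comono μ hUm hU hXm]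

include hU in
lemma joint_survival_le {Y : Ω → ℝ} (hYm : Measurable Y) (s t : ℝ) :
    μ {ω | s < X ω ∧ t < Y ω} ≤ μ {ω | s < comono μ U X ω ∧ t < comono μ U Y ω} := by
  set νX := Measure.map X μ with hνX
  set νY := Measure.map Y μ with hνY
  have hpX : IsProbabilityMeasure νX := Measure.isProbabilityMeasure_map hXm.aemeasurable
  have hpY : IsProbabilityMeasure νY := Measure.isProbabilityMeasure_map hYm.aemeasurable
  set A := quantile νX ⁻¹' Ioi s with hA
  set B := quantile νY ⁻¹' Ioi t with hB
  have hAm : MeasurableSet A := (measurable_quantile νX) measurableSet_Ioi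
  have hBm : MeasurableSet B := (measurable_quantile νY) measurableSet_Ioi
  have hpre : {ω | s < comono μ U X ω ∧ t < comono μ U Y ω} = U ⁻¹' (A ∩ B) := rfl
  have hmap : ∀ (C : Set ℝ), MeasurableSet C → μ (U ⁻¹' C) = volume (C ∩ Ioo (0:ℝ) 1) := by
    intro C hC
    rw [← Measure.map_apply hUm hC, hU, Measure.restrict_apply hC]
  -- nesting of A ∩ Ioo 0 1 and B ∩ Ioo 0 1
  have hnest : A ∩ Ioo (0:ℝ) 1 ⊆ B ∩ Ioo (0:ℝ) 1 ∨ B ∩ Ioo (0:ℝ) 1 ⊆ A ∩ Ioo (0:ℝ) 1 := by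
    by_contra hcon
    push_neg at hcon
    obtain ⟨h1, h2⟩ := hcon
    obtain ⟨a, ha, haB⟩ := Set.not_subset.mp h1
    obtain ⟨b, hb, hbA⟩ := Set.not_subset.mp h2
    rcases le_total a b with hab | hab
    · refine hbA ⟨?_, hb.2⟩
      have := quantile_mono νX ha.2.1 hb.2.2 hab
      exact mem_of_eq_of_mem rfl (lt_of_lt_of_le ha.1 this)
    · refine haB ⟨?_, ha.2⟩
      have := quantile_mono νY hb.2.1 ha.2.2 hab
      exact mem_of_eq_of_mem rfl (lt_of_lt_of_le hb.1 this)
  have hSx : μ {ω | s < comono μ U X ω} = volume (A ∩ Ioo (0:ℝ) 1) := by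
    have : {ω | s < comono μ U X ω} = U ⁻¹' A := rfl
    rw [this, hmap A hAm]
  have hSy : μ {ω | t < comono μ U Y ω} = volume (B ∩ Ioo (0:ℝ) 1) := by
    have : {ω | t < comono μ U Y ω} = U ⁻¹' B := rfl
    rw [this, hmap B hBm]
  have hRHS : μ {ω | s < comono μ U X ω ∧ t < comono μ U Y ω} =
      min (μ {ω | s < X ω}) (μ {ω | t < Y ω}) := by
    rw [hpre, hmap (A ∩ B) (hAm.inter hBm)]
    rw [← survival_comono μ hUm hU hXm s, ← survival_comono μ hUm hU hYm t, hSx, hSy]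
    have hABI : (A ∩ B) ∩ Ioo (0:ℝ) 1 = (A ∩ Ioo (0:ℝ) 1) ∩ (B ∩ Ioo (0:ℝ) 1) := by
      ext p; simp only [mem_inter_iff, mem_Ioo]; tauto
    rw [hABI]
    rcases hnest with h | h
    · rw [inter_eq_left.mpr h]
      exact (min_eq_left (measure_mono h)).symm
    · rw [inter_eq_right.mpr h]
      exact (min_eq_right (measure_mono h)).symm
  rw [hRHS]
  refine le_min (measure_mono ?_) (measure_mono ?_)
  · exact fun ω hω => hω.1
  · exact fun ω hω => hω.2

end Comono

section Hoeffding

noncomputable def ff (s x : ℝ) : ℝ := (if s < x then 1 else 0) - (if s < 0 then 1 else 0)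

lemma ff_of_nonneg {x : ℝ} (hx : 0 ≤ x) :
    (fun s => ff s x) = (Ico (0:ℝ) x).indicator (fun _ => (1:ℝ)) := by
  funext s
  rcases lt_or_ge s 0 with hs | hs
  · have h1 : s < x := lt_of_lt_of_le hs hx
    simp [ff, h1, hs, Set.indicator, not_le.mpr hs]
  · rcases lt_or_ge s x with h2 | h2
    · simp [ff, h2, not_lt.mpr hs, Set.indicator, hs]
    · simp [ff, not_lt.mpr h2, not_lt.mpr hs, Set.indicator]

lemma ff_of_neg {x : ℝ} (hx : x < 0) :
    (fun s => ff s x) = fun s => -((Ico x (0:ℝ)).indicator (fun _ => (1:ℝ)) s) := by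
  funext s
  rcases lt_or_ge s x with hs | hs
  · have h1 : s < 0 := lt_trans hs hx
    simp [ff, hs, h1, Set.indicator, not_le.mpr hs]
  · rcases lt_or_ge s 0 with h2 | h2
    · simp [ff, not_lt.mpr hs, h2, Set.indicator, hs]
    · have h3 : ¬ s < x := not_lt.mpr (le_trans hx.le h2)
      simp [ff, h3, not_lt.mpr h2, Set.indicator, not_lt.mpr h2]

lemma integrable_ff (x : ℝ) : Integrable (fun s => ff s x) volume := by
  rcases le_or_gt 0 x with hx | hx
  · rw [ff_of_nonneg hx]
    refine (integrable_indicator_iff measurableSet_Ico).mpr ?_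
    exact integrableOn_const (by rw [Real.volume_Ico]; exact ENNReal.ofReal_ne_top)
  · rw [ff_of_neg hx]
    refine Integrable.neg ?_
    refine (integrable_indicator_iff measurableSet_Ico).mpr ?_
    exact integrableOn_const (by rw [Real.volume_Ico]; exact ENNReal.ofReal_ne_top)

lemma integral_ff (x : ℝ) : ∫ s, ff s x = x := by
  rcases le_or_gt 0 x with hx | hx
  · rw [ff_of_nonneg hx, integral_indicator measurableSet_Ico, setIntegral_const, measureReal_def,
      Real.volume_Ico, smul_eq_mul, mul_one, ENNReal.toReal_ofReal (by linarith)]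
    ring
  · rw [ff_of_neg hx, integral_neg, integral_indicator measurableSet_Ico, setIntegral_const, measureReal_def,
      Real.volume_Ico, smul_eq_mul, mul_one, ENNReal.toReal_ofReal (by linarith)]
    ring

lemma abs_ff (x : ℝ) : (fun s => |ff s x|) = fun s => |x|⁻¹ * 0 + |ff s x| := by
  funext s; ring

lemma integral_abs_ff (x : ℝ) : ∫ s, |ff s x| = |x| := by
  rcases le_or_gt 0 x with hx | hx
  · have h : (fun s => |ff s x|) = fun s => ff s x := by
      funext s
      refine abs_of_nonneg ?_
      rw [congrFun (ff_of_nonneg hx) s]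
      exact Set.indicator_nonneg (fun _ _ => zero_le_one) s
    rw [h, integral_ff, abs_of_nonneg hx]
  · have h : (fun s => |ff s x|) = fun s => -(ff s x) := by
      funext s
      refine abs_of_nonpos ?_
      rw [congrFun (ff_of_neg hx) s]
      simp only [neg_nonpos]
      exact Set.indicator_nonneg (fun _ _ => zero_le_one) s
    rw [h, integral_neg, integral_ff, abs_of_neg hx]

variable {Ω : Type*} [MeasurableSpace Ω] (μ : Measure Ω) [IsProbabilityMeasure μ]

lemma integrable_mul_L2 {f g : Ω → ℝ} (hf : MemLp f 2 μ) (hg : MemLp g 2 μ) :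
    Integrable (fun ω => f ω * g ω) μ := by
  have h : MemLp (f • g) 1 μ := hg.smul hf (hpqr := ⟨by rw [inv_one]; exact ENNReal.inv_two_add_inv_two⟩)
  have := memLp_one_iff_integrable.mp h
  exact this

variable {X Y : Ω → ℝ} (hXm : Measurable X) (hYm : Measurable Y)

include hXm hYm

lemma measurable_ffF :
    Measurable (fun q : Ω × (ℝ × ℝ) => ff q.2.1 (X q.1) * ff q.2.2 (Y q.1)) := by
  have h1 : MeasurableSet {q : Ω × (ℝ × ℝ) | q.2.1 < X q.1} :=
    measurableSet_lt (measurable_snd.fst) (hXm.comp measurable_fst)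
  have h2 : MeasurableSet {q : Ω × (ℝ × ℝ) | q.2.1 < (0:ℝ)} :=
    measurableSet_lt (measurable_snd.fst) measurable_const
  have h3 : MeasurableSet {q : Ω × (ℝ × ℝ) | q.2.2 < Y q.1} :=
    measurableSet_lt (measurable_snd.snd) (hYm.comp measurable_fst)
  have h4 : MeasurableSet {q : Ω × (ℝ × ℝ) | q.2.2 < (0:ℝ)} :=
    measurableSet_lt (measurable_snd.snd) measurable_const
  exact (((Measurable.ite h1 measurable_const measurable_const).sub
    (Measurable.ite h2 measurable_const measurable_const))).mul
    (((Measurable.ite h3 measurable_const measurable_const).sub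
    (Measurable.ite h4 measurable_const measurable_const)))

lemma integrable_ffF (hX : MemLp X 2 μ) (hY : MemLp Y 2 μ) :
    Integrable (fun q : Ω × (ℝ × ℝ) => ff q.2.1 (X q.1) * ff q.2.2 (Y q.1))
      (μ.prod (volume.prod volume)) := by
  rw [MeasureTheory.integrable_prod_iff (measurable_ffF hXm hYm).aestronglyMeasurable]
  constructor
  · refine ae_of_all _ (fun ω => ?_)
    exact (integrable_ff (X ω)).mul_prod (integrable_ff (Y ω))
  · have heq : (fun ω => ∫ st : ℝ × ℝ, ‖ff st.1 (X ω) * ff st.2 (Y ω)‖ ∂(volume.prod volume)) =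
        fun ω => |X ω| * |Y ω| := by
      funext ω
      have h : (fun st : ℝ × ℝ => ‖ff st.1 (X ω) * ff st.2 (Y ω)‖) =
          fun st : ℝ × ℝ => |ff st.1 (X ω)| * |ff st.2 (Y ω)| := by
        funext st
        rw [Real.norm_eq_abs, abs_mul]
      rw [h, MeasureTheory.integral_prod_mul (fun s => |ff s (X ω)|) (fun t => |ff t (Y ω)|),
        integral_abs_ff, integral_abs_ff]
    rw [heq]
    have : Integrable (fun ω => X ω * Y ω) μ := integrable_mul_L2 μ hX hY
    have habs := this.abs
    refine habs.congr (ae_of_all _ (fun ω => ?_))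
    exact (abs_mul (X ω) (Y ω))

lemma integral_mul_repr (hX : MemLp X 2 μ) (hY : MemLp Y 2 μ) :
    ∫ ω, X ω * Y ω ∂μ =
      ∫ st : ℝ × ℝ, (∫ ω, ff st.1 (X ω) * ff st.2 (Y ω) ∂μ) ∂(volume.prod volume) := by
  have hFint := integrable_ffF μ hXm hYm hX hY
  have hswap := MeasureTheory.integral_integral_swap
    (f := fun ω (st : ℝ × ℝ) => ff st.1 (X ω) * ff st.2 (Y ω)) hFint
  have hinner : (fun ω => ∫ st : ℝ × ℝ, ff st.1 (X ω) * ff st.2 (Y ω) ∂(volume.prod volume)) =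
      fun ω => X ω * Y ω := by
    funext ω
    rw [MeasureTheory.integral_prod_mul (fun s => ff s (X ω)) (fun t => ff t (Y ω)),
      integral_ff, integral_ff]
  rw [← hinner]
  exact hswap

lemma integrable_inner_repr (hX : MemLp X 2 μ) (hY : MemLp Y 2 μ) :
    Integrable (fun st : ℝ × ℝ => ∫ ω, ff st.1 (X ω) * ff st.2 (Y ω) ∂μ)
      (volume.prod volume) :=
  (integrable_ffF μ hXm hYm hX hY).integral_prod_right

lemma inner_repr_eq (s t : ℝ) :
    ∫ ω, ff s (X ω) * ff t (Y ω) ∂μ =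
      (μ {ω | s < X ω ∧ t < Y ω}).toReal
      - (if t < 0 then (1:ℝ) else 0) * (μ {ω | s < X ω}).toReal
      - (if s < 0 then (1:ℝ) else 0) * (μ {ω | t < Y ω}).toReal
      + (if s < 0 then (1:ℝ) else 0) * (if t < 0 then (1:ℝ) else 0) := by
  set cs : ℝ := if s < 0 then 1 else 0 with hcs
  set ct : ℝ := if t < 0 then 1 else 0 with hct
  set S : Set Ω := X ⁻¹' Ioi s with hS
  set T : Set Ω := Y ⁻¹' Ioi t with hT
  have hSm : MeasurableSet S := hXm measurableSet_Ioi
  have hTm : MeasurableSet T := hYm measurableSet_Ioi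
  have hSTm : MeasurableSet (S ∩ T) := hSm.inter hTm
  have hiS : Integrable (S.indicator (fun _ => (1:ℝ))) μ := (integrable_const 1).indicator hSm
  have hiT : Integrable (T.indicator (fun _ => (1:ℝ))) μ := (integrable_const 1).indicator hTm
  have hiST : Integrable ((S ∩ T).indicator (fun _ => (1:ℝ))) μ :=
    (integrable_const 1).indicator hSTm
  have hpoint : (fun ω => ff s (X ω) * ff t (Y ω)) =
      fun ω => (S ∩ T).indicator (fun _ => (1:ℝ)) ω - ct * S.indicator (fun _ => (1:ℝ)) ω
        - cs * T.indicator (fun _ => (1:ℝ)) ω + cs * ct := by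
    funext ω
    have hmemS : ω ∈ S ↔ s < X ω := Iff.rfl
    have hmemT : ω ∈ T ↔ t < Y ω := Iff.rfl
    by_cases h1 : s < X ω <;> by_cases h2 : t < Y ω <;> by_cases h3 : s < 0 <;>
      by_cases h4 : t < 0 <;>
      simp [ff, Set.indicator, hS, hT, Set.mem_preimage, Set.mem_Ioi, h1, h2, h3, h4,
        hcs, hct] <;> ring
  have i_ct : Integrable (fun ω => ct * S.indicator (fun _ => (1:ℝ)) ω) μ := hiS.const_mul ct
  have i_cs : Integrable (fun ω => cs * T.indicator (fun _ => (1:ℝ)) ω) μ := hiT.const_mul cs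
  have i1 : Integrable (fun ω => (S ∩ T).indicator (fun _ => (1:ℝ)) ω
      - ct * S.indicator (fun _ => (1:ℝ)) ω) μ := hiST.sub i_ct
  have i2 : Integrable (fun ω => ((S ∩ T).indicator (fun _ => (1:ℝ)) ω
      - ct * S.indicator (fun _ => (1:ℝ)) ω) - cs * T.indicator (fun _ => (1:ℝ)) ω) μ :=
    i1.sub i_cs
  rw [hpoint]
  rw [integral_add i2 (integrable_const (cs * ct)),
    integral_sub i1 i_cs,
    integral_sub hiST i_ct, integral_const_mul, integral_const_mul,
    MeasureTheory.integral_indicator_const _ hSTm,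
    MeasureTheory.integral_indicator_const _ hSm,
    MeasureTheory.integral_indicator_const _ hTm,
    integral_const]
  simp only [smul_eq_mul, mul_one, measureReal_def, measure_univ, ENNReal.toReal_one, one_mul]
  have h1 : S ∩ T = {ω | s < X ω ∧ t < Y ω} := rfl
  have h2 : S = {ω | s < X ω} := rfl
  have h3 : T = {ω | t < Y ω} := rfl
  rw [h1, h2, h3]

end Hoeffding

section Main

variable {Ω : Type*} [MeasurableSpace Ω] (μ : Measure Ω) [IsProbabilityMeasure μ]
  {U : Ω → ℝ} (hUm : Measurable U)
  (hU : Measure.map U μ = volume.restrict (Set.Ioo (0 : ℝ) 1))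

include hUm hU

lemma integral_mul_le {X Y : Ω → ℝ} (hXm : Measurable X) (hYm : Measurable Y)
    (hX : MemLp X 2 μ) (hY : MemLp Y 2 μ) :
    ∫ ω, X ω * Y ω ∂μ ≤ ∫ ω, comono μ U X ω * comono μ U Y ω ∂μ := by
  have hcXm : Measurable (comono μ U X) := measurable_comono μ hUm hXm
  have hcYm : Measurable (comono μ U Y) := measurable_comono μ hUm hYm
  have hcX : MemLp (comono μ U X) 2 μ := memℒp_comono μ hUm hU hXm hX
  have hcY : MemLp (comono μ U Y) 2 μ := memℒp_comono μ hUm hU hYm hY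
  rw [integral_mul_repr μ hXm hYm hX hY, integral_mul_repr μ hcXm hcYm hcX hcY]
  refine integral_mono (integrable_inner_repr μ hXm hYm hX hY)
    (integrable_inner_repr μ hcXm hcYm hcX hcY) ?_
  intro st
  simp only []
  rw [inner_repr_eq μ hXm hYm st.1 st.2, inner_repr_eq μ hcXm hcYm st.1 st.2,
    survival_comono μ hUm hU hXm st.1, survival_comono μ hUm hU hYm st.2]
  have hkey : (μ {ω | st.1 < X ω ∧ st.2 < Y ω}).toReal ≤
      (μ {ω | st.1 < comono μ U X ω ∧ st.2 < comono μ U Y ω}).toReal :=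
    ENNReal.toReal_mono (measure_ne_top μ _) (joint_survival_le μ hUm hU hXm hYm st.1 st.2)
  linarith

lemma cov'_le {X Y : Ω → ℝ} (hXm : Measurable X) (hYm : Measurable Y)
    (hX : MemLp X 2 μ) (hY : MemLp Y 2 μ) :
    cov' μ X Y ≤ cov' μ (comono μ U X) (comono μ U Y) := by
  unfold cov'
  rw [integral_comono μ hUm hU hXm hX, integral_comono μ hUm hU hYm hY]
  exact sub_le_sub_right (integral_mul_le μ hUm hU hXm hYm hX hY) _

omit hUm hU

lemma var'_expand {d : ℕ} (Z : Fin d → Ω → ℝ) (hZ : ∀ i, MemLp (Z i) 2 μ) (w : Fin d → ℝ) :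
    var' μ (fun ω => ∑ i, w i * Z i ω) = ∑ i, ∑ j, (w i * w j) * cov' μ (Z i) (Z j) := by
  have hint : ∀ i j : Fin d, Integrable (fun ω => (w i * Z i ω) * (w j * Z j ω)) μ :=
    fun i j => integrable_mul_L2 μ ((hZ i).const_mul (w i)) ((hZ j).const_mul (w j))
  have hZi : ∀ i : Fin d, Integrable (fun ω => w i * Z i ω) μ :=
    fun i => ((hZ i).const_mul (w i)).integrable (by norm_num)
  have hprod : ∫ ω, (∑ i, w i * Z i ω) * (∑ j, w j * Z j ω) ∂μ =
      ∑ i, ∑ j, ∫ ω, (w i * Z i ω) * (w j * Z j ω) ∂μ := by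
    have hpt : (fun ω => (∑ i, w i * Z i ω) * (∑ j, w j * Z j ω)) =
        fun ω => ∑ i, ∑ j, (w i * Z i ω) * (w j * Z j ω) := by
      funext ω; rw [Finset.sum_mul_sum]
    rw [hpt, integral_finset_sum _ (fun i _ => integrable_finset_sum _ (fun j _ => hint i j))]
    exact Finset.sum_congr rfl fun i _ => integral_finset_sum _ (fun j _ => hint i j)
  have hsum : ∫ ω, (∑ i, w i * Z i ω) ∂μ = ∑ i, ∫ ω, w i * Z i ω ∂μ :=
    integral_finset_sum _ (fun i _ => hZi i)
  show (∫ ω, (∑ i, w i * Z i ω) * (∑ i, w i * Z i ω) ∂μ) -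
      (∫ ω, (∑ i, w i * Z i ω) ∂μ) * (∫ ω, (∑ i, w i * Z i ω) ∂μ) = _
  rw [hprod, hsum, Finset.sum_mul_sum, ← Finset.sum_sub_distrib]
  refine Finset.sum_congr rfl fun i _ => ?_
  rw [← Finset.sum_sub_distrib]
  refine Finset.sum_congr rfl fun j _ => ?_
  have e1 : ∫ ω, (w i * Z i ω) * (w j * Z j ω) ∂μ =
      (w i * w j) * ∫ ω, Z i ω * Z j ω ∂μ := by
    rw [← integral_const_mul]
    congr 1
    funext ω
    ring
  have e2 : ∀ k : Fin d, ∫ ω, w k * Z k ω ∂μ = w k * ∫ ω, Z k ω ∂μ :=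
    fun k => integral_const_mul _ _
  rw [e1, e2 i, e2 j]
  show _ = (w i * w j) * ((∫ ω, Z i ω * Z j ω ∂μ) - (∫ ω, Z i ω ∂μ) * (∫ ω, Z j ω ∂μ))
  ring

end Main

end StmtAux

theorem stmt_14 {Ω : Type*} [MeasurableSpace Ω] (μ : Measure Ω) [IsProbabilityMeasure μ]
    (U : Ω → ℝ) (hUm : Measurable U)
    (hU : Measure.map U μ = volume.restrict (Set.Ioo (0 : ℝ) 1))
    {d : ℕ} (X : Fin d → Ω → ℝ) (hXm : ∀ i, Measurable (X i))
    (hX : ∀ i, MemLp (X i) 2 μ) (w : Fin d → ℝ) (hw : ∀ i, 0 ≤ w i) :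
    var' μ (fun ω => ∑ i, w i * X i ω) ≤
      var' μ (fun ω => ∑ i, w i * comono μ U (X i) ω) := by
  have hcX : ∀ i, MemLp (comono μ U (X i)) 2 μ :=
    fun i => StmtAux.memℒp_comono μ hUm hU (hXm i) (hX i)
  rw [StmtAux.var'_expand μ X hX w, StmtAux.var'_expand μ (fun i => comono μ U (X i)) hcX w]
  refine Finset.sum_le_sum fun i _ => Finset.sum_le_sum fun j _ => ?_
  exact mul_le_mul_of_nonneg_left
    (StmtAux.cov'_le μ hUm hU (hXm i) (hXm j) (hX i) (hX j))
    (mul_nonneg (hw i) (hw j))
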